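/- Let ν, ν' ∈ ℝ⁴ be unit vectors and set a₁ = ⟪ν', ν⟫, a₂ = ⟪i·ν', ν⟫, a₃ = ⟪j·ν', ν⟫, a₄ = ⟪k·ν', ν⟫. Assume a₂ > 0. Define the 2×2 matrix ψ = (1/a₂)·[[a₁a₂ − a₃a₄, −(a₂² + a₄²)], [a₂² + a₃², a₁a₂ + a₃a₄]]. Then: (i) for every V ∈ ℝ⁴ orthogonal to both ν and ν', one has (⟪V, j·ν⟫, ⟪V, k·ν⟫) = ψ·(⟪V, j·ν'⟫, ⟪V, k·ν'⟫); (ii) det ψ = 1; (iii) Tr ψ = 2a₁ and −2 < Tr ψ < 2; and (iv) ψ is positive elliptic, i.e. for every v ∈ ℝ² \ {0}, the determinant of the 2×2 matrix with columns v and ψ·v is positive. (Lemma 2.18 of the paper: the transition matrix ψ_F = τ_F ∘ (τ'_F)⁻¹ of a 2-face is positive elliptic.) -/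

import Mathlib

open RealInnerProductSpace

/-- The standard complex structure on ℝ⁴:
`i(x₁,x₂,y₁,y₂) = (−y₁,−y₂,x₁,x₂)`. -/
def Imap (v : EuclideanSpace ℝ (Fin 4)) : EuclideanSpace ℝ (Fin 4) :=
  WithLp.toLp 2 ![-(v 2), -(v 3), v 0, v 1]

/-- The quaternion `j` acting on ℝ⁴: `j(x₁,x₂,y₁,y₂) = (−x₂,x₁,y₂,−y₁)`. -/
def Jmap (v : EuclideanSpace ℝ (Fin 4)) : EuclideanSpace ℝ (Fin 4) :=
  WithLp.toLp 2 ![-(v 1), v 0, v 3, -(v 2)]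

/-- The quaternion `k` acting on ℝ⁴: `k(x₁,x₂,y₁,y₂) = (−y₂,y₁,−x₂,x₁)`. -/
def Kmap (v : EuclideanSpace ℝ (Fin 4)) : EuclideanSpace ℝ (Fin 4) :=
  WithLp.toLp 2 ![-(v 3), v 2, -(v 1), v 0]

set_option maxHeartbeats 1000000 in
/-- Lemma 2.18: let `ν, ν' ∈ ℝ⁴` be unit vectors, set `a₁ = ⟪ν',ν⟫`,
`a₂ = ⟪iν',ν⟫`, `a₃ = ⟪jν',ν⟫`, `a₄ = ⟪kν',ν⟫` and suppose `a₂ > 0`.  Then the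
transition matrix
`ψ = (1/a₂)·[[a₁a₂ − a₃a₄, −(a₂² + a₄²)], [a₂² + a₃², a₁a₂ + a₃a₄]]`
intertwines the two quaternionic trivializations on `(span{ν,ν'})^⊥`, has
determinant 1 and trace `2a₁ ∈ (−2, 2)`, and is positive elliptic. -/
theorem transition_matrix_positive_elliptic
    (ν ν' : EuclideanSpace ℝ (Fin 4)) (hν : ‖ν‖ = 1) (hν' : ‖ν'‖ = 1)
    (a₁ a₂ a₃ a₄ : ℝ)
    (ha₁ : a₁ = ⟪ν', ν⟫) (ha₂ : a₂ = ⟪Imap ν', ν⟫)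
    (ha₃ : a₃ = ⟪Jmap ν', ν⟫) (ha₄ : a₄ = ⟪Kmap ν', ν⟫)
    (ha₂pos : 0 < a₂)
    (ψ : Matrix (Fin 2) (Fin 2) ℝ)
    (hψ : ψ = (1 / a₂) •
      !![a₁ * a₂ - a₃ * a₄, -(a₂ ^ 2 + a₄ ^ 2); a₂ ^ 2 + a₃ ^ 2, a₁ * a₂ + a₃ * a₄]) :
    (∀ V : EuclideanSpace ℝ (Fin 4), ⟪V, ν⟫ = 0 → ⟪V, ν'⟫ = 0 →
      ![⟪V, Jmap ν⟫, ⟪V, Kmap ν⟫] = ψ.mulVec ![⟪V, Jmap ν'⟫, ⟪V, Kmap ν'⟫]) ∧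
    ψ.det = 1 ∧
    (ψ.trace = 2 * a₁ ∧ -2 < ψ.trace ∧ ψ.trace < 2) ∧
    (∀ v : Fin 2 → ℝ, v ≠ 0 →
      0 < (!![v 0, ψ.mulVec v 0; v 1, ψ.mulVec v 1] : Matrix (Fin 2) (Fin 2) ℝ).det) := by
  have ha₂ne : a₂ ≠ 0 := ne_of_gt ha₂pos
  -- expanded forms of the hypotheses
  have hm : ν' 0 * ν' 0 + ν' 1 * ν' 1 + ν' 2 * ν' 2 + ν' 3 * ν' 3 = 1 := by
    have h : ⟪ν', ν'⟫ = 1 := by rw [real_inner_self_eq_norm_sq, hν']; norm_num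
    simp only [PiLp.inner_apply, RCLike.inner_apply, conj_trivial, Fin.sum_univ_four] at h
    linarith
  have hn : ν 0 * ν 0 + ν 1 * ν 1 + ν 2 * ν 2 + ν 3 * ν 3 = 1 := by
    have h : ⟪ν, ν⟫ = 1 := by rw [real_inner_self_eq_norm_sq, hν]; norm_num
    simp only [PiLp.inner_apply, RCLike.inner_apply, conj_trivial, Fin.sum_univ_four] at h
    linarith
  simp only [PiLp.inner_apply, RCLike.inner_apply, Imap, Jmap, Kmap, PiLp.toLp_apply, Fin.sum_univ_four,
    conj_trivial, Matrix.cons_val_zero, Matrix.cons_val_one, Matrix.head_cons,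
    Matrix.cons_val_two, Matrix.tail_cons, Matrix.cons_val_three] at ha₁ ha₂ ha₃ ha₄
  have hS : a₁ ^ 2 + a₂ ^ 2 + a₃ ^ 2 + a₄ ^ 2 = 1 := by
    rw [ha₁, ha₂, ha₃, ha₄]
    linear_combination (ν 0 * ν 0 + ν 1 * ν 1 + ν 2 * ν 2 + ν 3 * ν 3) * hm + hn
  refine ⟨?_, ?_, ⟨?_, ?_, ?_⟩, ?_⟩
  · -- intertwining
    intro V hVn hVm
    simp only [PiLp.inner_apply, RCLike.inner_apply, Fin.sum_univ_four, conj_trivial]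
      at hVn hVm
    have key1 : a₂ * ⟪V, Jmap ν⟫ =
        (a₁ * a₂ - a₃ * a₄) * ⟪V, Jmap ν'⟫ - (a₂ ^ 2 + a₄ ^ 2) * ⟪V, Kmap ν'⟫ := by
      simp only [PiLp.inner_apply, RCLike.inner_apply, Imap, Jmap, Kmap, PiLp.toLp_apply, Fin.sum_univ_four,
        conj_trivial, Matrix.cons_val_zero, Matrix.cons_val_one, Matrix.head_cons,
        Matrix.cons_val_two, Matrix.tail_cons, Matrix.cons_val_three]
      rw [ha₁, ha₂, ha₃, ha₄]
      linear_combination (-(((-ν' 2) * ν 0 + (-ν' 3) * ν 1 + ν' 0 * ν 2 + ν' 1 * ν 3) * (V 0 * (-ν 1) + V 1 * ν 0 + V 2 * ν 3 + V 3 * (-ν 2)))) * hm + (-(((-ν' 2) * ν 0 + (-ν' 3) * ν 1 + ν' 0 * ν 2 + ν' 1 * ν 3) * ((-ν' 1) * ν 0 + ν' 0 * ν 1 + ν' 3 * ν 2 + (-ν' 2) * ν 3) + (ν' 0 * ν 0 + ν' 1 * ν 1 + ν' 2 * ν 2 + ν' 3 * ν 3) * ((-ν' 3) * ν 0 + ν'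 2 * ν 1 + (-ν' 1) * ν 2 + ν' 0 * ν 3))) * hVm + (((-ν' 3) * ν 0 + ν' 2 * ν 1 + (-ν' 1) * ν 2 + ν' 0 * ν 3) * (ν' 0 * ν' 0 + ν' 1 * ν' 1 + ν' 2 * ν' 2 + ν' 3 * ν' 3)) * hVn
    have key2 : a₂ * ⟪V, Kmap ν⟫ =
        (a₂ ^ 2 + a₃ ^ 2) * ⟪V, Jmap ν'⟫ + (a₁ * a₂ + a₃ * a₄) * ⟪V, Kmap ν'⟫ := by
      simp only [PiLp.inner_apply, RCLike.inner_apply, Imap, Jmap, Kmap, PiLp.toLp_apply, Fin.sum_univ_four,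
        conj_trivial, Matrix.cons_val_zero, Matrix.cons_val_one, Matrix.head_cons,
        Matrix.cons_val_two, Matrix.tail_cons, Matrix.cons_val_three]
      rw [ha₁, ha₂, ha₃, ha₄]
      linear_combination (-(((-ν' 2) * ν 0 + (-ν' 3) * ν 1 + ν' 0 * ν 2 + ν' 1 * ν 3) * (V 0 * (-ν 3) + V 1 * ν 2 + V 2 * (-ν 1) + V 3 * ν 0))) * hm + ((ν' 0 * ν 0 + ν' 1 * ν 1 + ν' 2 * ν 2 + ν' 3 * ν 3) * ((-ν' 1) * ν 0 + ν' 0 * ν 1 + ν' 3 * ν 2 + (-ν' 2) * ν 3) - ((-ν' 2) * ν 0 + (-ν' 3) * ν 1 + ν' 0 * ν 2 + ν' 1 * ν 3) * ((-ν' 3) * ν 0 + ν' 2 * ν 1 + (-ν' 1) * ν 2 + ν' 0 * ν 3)) * hVm + (-(((-ν' 1) * ν 0 + ν' 0 * ν 1 + ν' 3 * ν 2 + (-ν' 2) * ν 3) * (ν' 0 * ν' 0 + ν' 1 * ν' 1 + ν' 2 * ν' 2 + ν' 3 * ν' 3))) * hVn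
    funext i
    fin_cases i
    · simp only [hψ, Matrix.mulVec, dotProduct, Fin.sum_univ_two, Matrix.smul_apply, Fin.zero_eta, Fin.mk_one,
        Matrix.of_apply, Matrix.cons_val', Matrix.cons_val_zero, Matrix.cons_val_one,
        Matrix.head_cons, Matrix.empty_val', Matrix.cons_val_fin_one, Matrix.head_fin_const,
        smul_eq_mul]
      simp only [PiLp.inner_apply, RCLike.inner_apply, conj_trivial] at key1 ⊢
      field_simp
      linear_combination key1
    · simp only [hψ, Matrix.mulVec, dotProduct, Fin.sum_univ_two, Matrix.smul_apply, Fin.zero_eta, Fin.mk_one,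
        Matrix.of_apply, Matrix.cons_val', Matrix.cons_val_zero, Matrix.cons_val_one,
        Matrix.head_cons, Matrix.empty_val', Matrix.cons_val_fin_one, Matrix.head_fin_const,
        smul_eq_mul]
      simp only [PiLp.inner_apply, RCLike.inner_apply, conj_trivial] at key2 ⊢
      field_simp
      linear_combination key2
  · -- determinant
    rw [hψ]
    simp only [Matrix.det_fin_two, Matrix.smul_apply, Matrix.of_apply, Matrix.cons_val',
      Matrix.cons_val_zero, Matrix.cons_val_one, Matrix.head_cons, Matrix.empty_val',
      Matrix.cons_val_fin_one, Matrix.head_fin_const, smul_eq_mul]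
    field_simp
    linear_combination a₂ ^ 2 * hS
  · -- trace value
    rw [hψ]
    simp only [Matrix.trace_fin_two, Matrix.smul_apply, Matrix.of_apply, Matrix.cons_val',
      Matrix.cons_val_zero, Matrix.cons_val_one, Matrix.head_cons, Matrix.empty_val',
      Matrix.cons_val_fin_one, Matrix.head_fin_const, smul_eq_mul]
    field_simp
    ring
  · -- trace lower bound
    have h1 : ψ.trace = 2 * a₁ := by
      rw [hψ]
      simp only [Matrix.trace_fin_two, Matrix.smul_apply, Matrix.of_apply, Matrix.cons_val',
        Matrix.cons_val_zero, Matrix.cons_val_one, Matrix.head_cons, Matrix.empty_val',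
        Matrix.cons_val_fin_one, Matrix.head_fin_const, smul_eq_mul]
      field_simp
      ring
    rw [h1]
    nlinarith [sq_nonneg (a₁ + 1), sq_nonneg a₃, sq_nonneg a₄, mul_pos ha₂pos ha₂pos]
  · -- trace upper bound
    have h1 : ψ.trace = 2 * a₁ := by
      rw [hψ]
      simp only [Matrix.trace_fin_two, Matrix.smul_apply, Matrix.of_apply, Matrix.cons_val',
        Matrix.cons_val_zero, Matrix.cons_val_one, Matrix.head_cons, Matrix.empty_val',
        Matrix.cons_val_fin_one, Matrix.head_fin_const, smul_eq_mul]
      field_simp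
      ring
    rw [h1]
    nlinarith [sq_nonneg (a₁ - 1), sq_nonneg a₃, sq_nonneg a₄, mul_pos ha₂pos ha₂pos]
  · -- positive ellipticity
    intro v hv
    have hv' : v 0 ≠ 0 ∨ v 1 ≠ 0 := by
      by_contra h
      push_neg at h
      exact hv (funext fun i => by fin_cases i <;> simp [h.1, h.2])
    have hnum : 0 < a₂ ^ 2 * (v 0 ^ 2 + v 1 ^ 2) + (a₃ * v 0 + a₄ * v 1) ^ 2 := by
      rcases hv' with h | h
      · nlinarith [sq_nonneg (a₃ * v 0 + a₄ * v 1), sq_nonneg (v 1),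
          mul_pos (mul_pos ha₂pos ha₂pos) (mul_pos (abs_pos.mpr h) (abs_pos.mpr h)),
          sq_abs (v 0)]
      · nlinarith [sq_nonneg (a₃ * v 0 + a₄ * v 1), sq_nonneg (v 0),
          mul_pos (mul_pos ha₂pos ha₂pos) (mul_pos (abs_pos.mpr h) (abs_pos.mpr h)),
          sq_abs (v 1)]
    have hdet : (!![v 0, ψ.mulVec v 0; v 1, ψ.mulVec v 1] : Matrix (Fin 2) (Fin 2) ℝ).det =
        (a₂ ^ 2 * (v 0 ^ 2 + v 1 ^ 2) + (a₃ * v 0 + a₄ * v 1) ^ 2) / a₂ := by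
      rw [hψ]
      simp only [Matrix.det_fin_two_of, Matrix.mulVec, dotProduct, Fin.sum_univ_two,
        Matrix.smul_apply, Matrix.of_apply, Matrix.cons_val', Matrix.cons_val_zero,
        Matrix.cons_val_one, Matrix.head_cons, Matrix.empty_val', Matrix.cons_val_fin_one,
        Matrix.head_fin_const, smul_eq_mul]
      field_simp
      ring
    rw [hdet]
    exact div_pos hnum ha₂pos
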